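/- arXiv:1903.02065 — 2 statements merged into one kernel-verified Lean document; each statement's English description precedes it below -/
import Mathlib

section
/- Every nondegenerate metric continuum (compact connected metric space with more than one point) contains a nondegenerate subcontinuum that is irreducible between two of its points. -/
open Set

/-- The intersection of a nonempty chain of compact connected sets each containing
two given points is preconnected (in a T4 space, e.g. a metric space). -/
lemma sInter_chain_preconnected {X : Type*} [MetricSpace X]
    (c : Set (Set X)) (hc : IsChain (· ⊆ ·) c) (hne : c.Nonempty)
    (hcomp : ∀ s ∈ c, IsCompact s) (hconn : ∀ s ∈ c, IsPreconnected s)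
    (hnon : ∀ s ∈ c, s.Nonempty) : IsPreconnected (⋂₀ c) := by
  have hdir : DirectedOn (· ⊇ ·) c := IsChain.directedOn hc.symm
  have hK : ⋂₀ c = ⋂ s : c, (s : Set X) := by simp [sInter_eq_iInter]
  haveI : Nonempty c := hne.to_subtype
  -- use the closed-sets characterization on a contradiction argument
  rw [isPreconnected_closed_iff]
  intro A B hA hB hcov hAK hBK
  by_contra hcon
  push_neg at hcon
  rcases hAK with ⟨a, haK, haA⟩
  rcases hBK with ⟨b, hbK, hbB⟩
  have hdisj : Disjoint (⋂₀ c ∩ A) (⋂₀ c ∩ B) := by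
    rw [Set.disjoint_iff]
    intro x hx
    exact (eq_empty_iff_forall_notMem.mp hcon x) ⟨hx.1.1, hx.1.2, hx.2.2⟩
  have hKclosed : IsClosed (⋂₀ c) :=
    isClosed_sInter fun s hs => (hcomp s hs).isClosed
  obtain ⟨U, V, hU, hV, hAU, hBV, hUV⟩ :=
    normal_separation (hKclosed.inter hA) (hKclosed.inter hB) hdisj
  -- consider the chain of compact sets s \ (U ∪ V)
  have key : (⋂ s : c, ((s : Set X) \ (U ∪ V))).Nonempty ∨
      ∃ s : c, ((s : Set X) \ (U ∪ V)) = ∅ := by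
    by_cases h : ∀ s : c, ((s : Set X) \ (U ∪ V)).Nonempty
    · left
      refine IsCompact.nonempty_iInter_of_directed_nonempty_isCompact_isClosed _
        ?_ h (fun s => ((hcomp s s.2).diff (hU.union hV)))
        (fun s => ((hcomp s s.2).isClosed).sdiff (hU.union hV))
      · intro s t
        rcases hdir s s.2 t t.2 with ⟨u, hu, hsu, htu⟩
        exact ⟨⟨u, hu⟩, diff_subset_diff_left hsu, diff_subset_diff_left htu⟩
    · right
      push_neg at h
      rcases h with ⟨s, hs⟩
      exact ⟨s, hs⟩
  rcases key with ⟨x, hx⟩ | ⟨⟨s, hs⟩, hsemp⟩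
  · -- x ∈ ⋂₀ c but x ∉ U ∪ V; yet ⋂₀ c ⊆ A ∪ B ⊆ U ∪ V... careful: A∪B covers K
    have hxK : x ∈ ⋂₀ c := by
      rw [hK]; exact mem_iInter.2 fun s => (mem_iInter.1 hx s).1
    have hxAB : x ∈ A ∪ B := hcov hxK
    have hxUV : x ∉ U ∪ V := (mem_iInter.1 hx ⟨hne.choose, hne.choose_spec⟩).2
    cases hxAB with
    | inl h => exact hxUV (Or.inl (hAU ⟨hxK, h⟩))
    | inr h => exact hxUV (Or.inr (hBV ⟨hxK, h⟩))
  · -- s ⊆ U ∪ V, s connected, meets both U and V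
    have hsub : s ⊆ U ∪ V := by
      intro x hx
      by_contra hx'
      exact absurd (mem_diff_of_mem hx hx') (by simp [hsemp])
    have haU : a ∈ U := hAU ⟨haK, haA⟩
    have hbV : b ∈ V := hBV ⟨hbK, hbB⟩
    have haS : a ∈ s := haK s hs
    have hbS : b ∈ s := hbK s hs
    have := hconn s hs U V hU hV hsub ⟨a, haS, haU⟩ ⟨b, hbS, hbV⟩
    rcases this with ⟨x, hxs, hxU, hxV⟩
    exact hUV.ne_of_mem hxU hxV rfl

/-- Every nondegenerate metric continuum (a compact connected metric space with at
least two points) contains a nondegenerate subcontinuum which is irreducible between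
two of its points: no proper subcontinuum of it contains both points. -/
theorem continuum_contains_irreducible_subcontinuum
    (X : Type*) [MetricSpace X] [CompactSpace X] [ConnectedSpace X]
    [Nontrivial X] :
    ∃ (K : Set X) (a b : X), a ∈ K ∧ b ∈ K ∧ a ≠ b ∧
      IsCompact K ∧ IsConnected K ∧
      ∀ K' ⊆ K, IsCompact K' → IsConnected K' → a ∈ K' → b ∈ K' → K' = K := by
  obtain ⟨a, b, hab⟩ := exists_pair_ne X
  set S : Set (Set X) := {K | IsCompact K ∧ IsConnected K ∧ a ∈ K ∧ b ∈ K} with hS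
  have hXS : (univ : Set X) ∈ S :=
    ⟨isCompact_univ, isConnected_univ, mem_univ a, mem_univ b⟩
  obtain ⟨K, -, hKS, hKmin⟩ := zorn_superset_nonempty S (fun c hcS hc hcne => by
    refine ⟨⋂₀ c, ⟨?_, ?_, ?_, ?_⟩, fun s hs => sInter_subset_of_mem hs⟩
    · exact (isClosed_sInter fun s hs => ((hcS hs).1).isClosed).isCompact
    · refine ⟨⟨a, fun s hs => (hcS hs).2.2.1⟩, ?_⟩
      exact sInter_chain_preconnected c hc hcne (fun s hs => (hcS hs).1)
        (fun s hs => (hcS hs).2.1.2) (fun s hs => (hcS hs).2.1.nonempty)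
    · exact fun s hs => (hcS hs).2.2.1
    · exact fun s hs => (hcS hs).2.2.2) univ hXS
  refine ⟨K, a, b, hKS.2.2.1, hKS.2.2.2, hab, hKS.1, hKS.2.1, ?_⟩
  intro K' hK'sub hK'c hK'conn haK' hbK'
  exact le_antisymm hK'sub (hKmin ⟨hK'c, hK'conn, haK', hbK'⟩ hK'sub)
end

section
/- The image of any Borel function defined on a Borel subset of a Polish space is an analytic set, and there exists an analytic subset of a Polish space that is not Borel (Suslin). -/
open MeasureTheory

section Suslin

open Set

/-- The basic clopen cylinder in Baire space determined by a finite list. -/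
def cylSet (s : List ℕ) : Set (ℕ → ℕ) :=
  {x | ∀ i, ∀ h : i < s.length, x i = s.get ⟨i, h⟩}

lemma isOpen_cylSet (s : List ℕ) : IsOpen (cylSet s) := by
  have : cylSet s = ⋂ i : Fin s.length, (fun x : ℕ → ℕ => x i) ⁻¹' {s.get i} := by
    ext x
    simp only [cylSet, mem_setOf_eq, mem_iInter, mem_preimage, mem_singleton_iff]
    constructor
    · exact fun h i => h i i.2
    · exact fun h i hi => h ⟨i, hi⟩
  rw [this]
  exact isOpen_iInter_of_finite fun i =>
    (continuous_apply (i : ℕ)).isOpen_preimage _ (isOpen_discrete _)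

lemma self_mem_cylSet (x : ℕ → ℕ) (n : ℕ) :
    x ∈ cylSet (List.ofFn fun i : Fin n => x i) := by
  intro i hi
  simp

lemma exists_cylSet_subset {O : Set (ℕ → ℕ)} (hO : IsOpen O) {x : ℕ → ℕ} (hx : x ∈ O) :
    ∃ s : List ℕ, x ∈ cylSet s ∧ cylSet s ⊆ O := by
  rcases isOpen_pi_iff.1 hO x hx with ⟨I, u, hu, hsub⟩
  rcases I.bddAbove with ⟨n, hn⟩
  refine ⟨List.ofFn fun i : Fin (n + 1) => x i, self_mem_cylSet _ _, ?_⟩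
  intro y hy
  apply hsub
  intro i hi
  have hin : i < n + 1 := Nat.lt_succ_of_le (hn hi)
  have hyi : y i = x i := by
    have h2 := hy i (by simpa using hin)
    rw [h2, List.get_ofFn]; simp
  rw [hyi]
  exact (hu i hi).2

/-- A universal open set: codes in `ℕ → ℕ`, points in `(ℕ → ℕ) × (ℕ → ℕ)`. -/
def univOpen : Set ((ℕ → ℕ) × ((ℕ → ℕ) × (ℕ → ℕ))) :=
  ⋃ p : List ℕ × List ℕ,
    {c | c (Encodable.encode p) = 1} ×ˢ (cylSet p.1 ×ˢ cylSet p.2)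

lemma isOpen_univOpen : IsOpen univOpen := by
  refine isOpen_iUnion fun p => IsOpen.prod ?_ ((isOpen_cylSet _).prod (isOpen_cylSet _))
  exact (continuous_apply (Encodable.encode p)).isOpen_preimage {1} (isOpen_discrete _)

/-- Universality: every open subset of `(ℕ→ℕ) × (ℕ→ℕ)` is a section of `univOpen`. -/
lemma univOpen_universal {O : Set ((ℕ → ℕ) × (ℕ → ℕ))} (hO : IsOpen O) :
    ∃ c : ℕ → ℕ, ∀ z, z ∈ O ↔ (c, z) ∈ univOpen := by
  classical
  refine ⟨fun k => if ∃ p : List ℕ × List ℕ,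
      Encodable.encode p = k ∧ cylSet p.1 ×ˢ cylSet p.2 ⊆ O then 1 else 0, fun z => ?_⟩
  constructor
  · intro hz
    rcases isOpen_prod_iff.1 hO z.1 z.2 hz with ⟨u, v, hu, hv, hzu, hzv, huv⟩
    rcases exists_cylSet_subset hu hzu with ⟨s, hxs, hsu⟩
    rcases exists_cylSet_subset hv hzv with ⟨t, hyt, htv⟩
    refine mem_iUnion.2 ⟨(s, t), ?_, hxs, hyt⟩
    simp only [mem_setOf_eq, if_pos]
    rw [if_pos]
    exact ⟨(s, t), rfl, fun w hw => huv ⟨hsu hw.1, htv hw.2⟩⟩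
  · intro hz
    rcases mem_iUnion.1 hz with ⟨p, hc, hz1, hz2⟩
    simp only [mem_setOf_eq] at hc
    by_cases h : ∃ q : List ℕ × List ℕ,
        Encodable.encode q = Encodable.encode p ∧ cylSet q.1 ×ˢ cylSet q.2 ⊆ O
    · rcases h with ⟨q, hq, hqO⟩
      have : q = p := Encodable.encode_injective hq
      subst this
      exact hqO ⟨hz1, hz2⟩
    · rw [if_neg h] at hc
      exact absurd hc (by norm_num)

/-- Every analytic subset of Baire space is a section of the universal analytic set
`{(c, x) | ∃ y, (c, (x, y)) ∉ univOpen}`. -/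
lemma analytic_is_section {S : Set (ℕ → ℕ)} (hS : AnalyticSet S) :
    ∃ c : ℕ → ℕ, ∀ x, x ∈ S ↔ ∃ y, (c, (x, y)) ∉ univOpen := by
  rw [AnalyticSet] at hS
  rcases hS with rfl | ⟨h, hcont, rfl⟩
  · refine ⟨fun _ => 1, fun x => ?_⟩
    simp only [mem_empty_iff_false, false_iff, not_exists, not_not]
    intro y
    exact mem_iUnion.2 ⟨([], []), rfl, fun i hi => absurd hi (by simp),
      fun i hi => absurd hi (by simp)⟩
  · -- `C = {z | z.1 = h z.2}` is closed; take `O = Cᶜ`.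
    have hC : IsClosed {z : (ℕ → ℕ) × (ℕ → ℕ) | z.1 = h z.2} := by
      have : {z : (ℕ → ℕ) × (ℕ → ℕ) | z.1 = h z.2} =
          (fun z : (ℕ → ℕ) × (ℕ → ℕ) => (z.1, h z.2)) ⁻¹' {w | w.1 = w.2} := by
        ext z; simp
      rw [this]
      exact (isClosed_eq continuous_fst continuous_snd).preimage
        (continuous_fst.prodMk (hcont.comp continuous_snd))
    rcases univOpen_universal hC.isOpen_compl with ⟨c, hc⟩
    refine ⟨c, fun x => ?_⟩
    constructor
    · rintro ⟨y, rfl⟩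
      refine ⟨y, fun hmem => ?_⟩
      have := (hc (h y, y)).2 hmem
      exact this rfl
    · rintro ⟨y, hy⟩
      have : ¬ (x, y) ∈ ({z : (ℕ → ℕ) × (ℕ → ℕ) | z.1 = h z.2}ᶜ) := fun hmem =>
        hy ((hc (x, y)).1 hmem)
      simp only [mem_compl_iff, mem_setOf_eq, not_not] at this
      exact ⟨y, this.symm⟩

/-- The diagonal analytic set. -/
def badSet : Set (ℕ → ℕ) := {x | ∃ y, (x, (x, y)) ∉ univOpen}

lemma analyticSet_badSet : AnalyticSet badSet := by
  haveI : PolishSpace ((ℕ → ℕ) × (ℕ → ℕ)) := inferInstance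
  haveI : PolishSpace ((ℕ → ℕ) × (ℕ → ℕ) × (ℕ → ℕ)) := inferInstance
  have hW : IsClosed {w : (ℕ → ℕ) × ((ℕ → ℕ) × (ℕ → ℕ)) | w ∉ univOpen ∧ w.2.1 = w.1} := by
    refine IsClosed.inter (isOpen_univOpen.isClosed_compl) ?_
    exact isClosed_eq (continuous_fst.comp continuous_snd) continuous_fst
  have := (hW.analyticSet).image_of_continuous (continuous_fst
    (X := ℕ → ℕ) (Y := (ℕ → ℕ) × (ℕ → ℕ)))
  convert this using 1
  ext x
  constructor
  · rintro ⟨y, hy⟩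
    exact ⟨(x, (x, y)), ⟨hy, rfl⟩, rfl⟩
  · rintro ⟨⟨a, b, y⟩, ⟨hw1, hw2⟩, rfl⟩
    simp only at hw2
    subst hw2
    exact ⟨y, hw1⟩

lemma not_measurableSet_badSet : ¬ MeasurableSet badSet := by
  intro hmeas
  have hcompl : AnalyticSet badSetᶜ := hmeas.compl.analyticSet
  rcases analytic_is_section hcompl with ⟨c, hc⟩
  have h1 : c ∈ badSetᶜ ↔ ∃ y, (c, (c, y)) ∉ univOpen := hc c
  have h2 : (c ∈ badSet) ↔ ∃ y, (c, (c, y)) ∉ univOpen := Iff.rfl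
  by_cases h : c ∈ badSet
  · exact (h1.2 (h2.1 h)) h
  · exact h (h2.2 (h1.1 h))

end Suslin

/-- **Suslin.** The image of a Borel subset of a Polish space under a Borel-measurable
map into a Polish space is an analytic set; moreover, analytic sets properly contain
the Borel sets: there is an analytic subset of the Baire space `ℕ → ℕ` that is not
Borel. -/
theorem analytic_images_and_nonBorel_analytic :
    (∀ (X Y : Type) [TopologicalSpace X] [PolishSpace X]
        [MeasurableSpace X] [BorelSpace X]
        [TopologicalSpace Y] [PolishSpace Y] [MeasurableSpace Y] [BorelSpace Y]
        (B : Set X) (f : X → Y), MeasurableSet B → Measurable f →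
        AnalyticSet (f '' B)) ∧
    (∃ A : Set (ℕ → ℕ), AnalyticSet A ∧ ¬ MeasurableSet A) := by
  exact ⟨fun X Y _ _ _ _ _ _ _ _ B f hB hf => hB.analyticSet_image hf,
    ⟨badSet, analyticSet_badSet, not_measurableSet_badSet⟩⟩
end
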